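/- Let (σ_k)_{k ∈ Fin n} be a maximal CDP family with conjugated family (E_j)_{j ∈ Fin n}, and let (A^k)_{k ∈ Fin n} be matrices in Matrix (Fin n) (Fin n) ℂ. For each i, j ∈ Fin n, the (i,j)-block of ρ[𝒜,Σ], namely the matrix B_{ij} with entries (B_{ij})_{pq} = ρ[𝒜,Σ]_{(i,p),(j,q)}, satisfies B_{ij} = m(E_i)ᵀ * D_{ij} * m(E_j), where D_{ij} is the diagonal matrix with diagonal entries (D_{ij})_{kk} = (A^k)_{ij} and m(π) is the permutation matrix of π. -/
import Mathlib


open Matrix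

/-- The permutation matrix of a permutation `π` of `Fin n` over `ℂ`. -/
def permMatrix {n : ℕ} (π : Equiv.Perm (Fin n)) : Matrix (Fin n) (Fin n) ℂ :=
  Matrix.of fun i j => if i = π j then 1 else 0

/-- The CDP matrix of `A` and a permutation `σ`. -/
def cdpMatrix {n : ℕ} (A : Matrix (Fin n) (Fin n) ℂ) (σ : Equiv.Perm (Fin n)) :
    Matrix (Fin n × Fin n) (Fin n × Fin n) ℂ :=
  Matrix.of fun x y => if x.2 = σ x.1 ∧ y.2 = σ y.1 then A x.1 y.1 else 0

/-- The `(i,j)`-block of `ρ[𝒜,Σ]` equals `m(E_i)ᵀ * D_{ij} * m(E_j)`, where `D_{ij}` is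
diagonal with entries `(A^k)_{ij}` and `(E_j)` is the conjugated family. -/
theorem cdpMatrix_block_structure {n : ℕ} [NeZero n] (σ : Fin n → Equiv.Perm (Fin n))
    (hcdp : ∀ i j, i ≠ j → ∀ k, σ i k ≠ σ j k)
    (hnorm : ∀ i, σ i 0 = i)
    (E : Fin n → Equiv.Perm (Fin n)) (hE : ∀ j k, E j (σ k j) = k)
    (A : Fin n → Matrix (Fin n) (Fin n) ℂ) (i j : Fin n) :
    (Matrix.of fun p q => (∑ k, cdpMatrix (A k) (σ k)) (i, p) (j, q)) =
      (permMatrix (E i))ᵀ * Matrix.diagonal (fun k => A k i j) * permMatrix (E j) := by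
  have key : ∀ (m p k : Fin n), p = σ k m ↔ k = E m p := by
    intro m p k
    constructor
    · rintro rfl; exact (hE m k).symm
    · rintro rfl; exact ((E m).injective (hE m _)).symm
  ext p q
  simp only [Matrix.of_apply, Matrix.sum_apply, cdpMatrix, Matrix.mul_apply,
    Matrix.transpose_apply, permMatrix, Matrix.diagonal_apply, key,
    ite_mul, one_mul, zero_mul, mul_ite, mul_one, mul_zero]
  by_cases h : E i p = E j q
  · simp [h, Finset.sum_ite_eq, Finset.sum_ite_eq']
  · have hz : (∑ x : Fin n, if x = E i p ∧ x = E j q then A x i j else 0) = 0 :=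
      Finset.sum_eq_zero fun x _ => by
        rw [if_neg]; rintro ⟨rfl, h2⟩; exact h h2
    rw [hz]
    simp [Finset.sum_ite_eq', Finset.sum_ite_eq, Ne.symm h]
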